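/- Let $F$ be a finite field with $q$ elements and $n \geq 1$. Then $\frac{1}{q^{n^2}} \sum_{r=0}^{n-1} q^{2n-1} |M(n-1,n-1,r,q)| \, (q;q)_{2n-2-r} = (q;q)_{n-1}^2$, where $|M(n-1,n-1,r,q)|$ is the number of $(n-1)\times(n-1)$ matrices of rank $r$ over $F$ and $(q;q)_k = \prod_{i=1}^{k}(1-q^i)$. -/

import Mathlib

set_option linter.unusedSectionVars false

namespace Stmt6
section Part2
open Finset

variable {Q : ℚ}

/-- q-Pochhammer -/
def Poch (Q : ℚ) (k : ℕ) : ℚ := ∏ i ∈ range k, (1 - Q ^ (i + 1))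

/-- Gaussian binomial -/
noncomputable def qB (Q : ℚ) (m r : ℕ) : ℚ :=
  if r ≤ m then Poch Q m / (Poch Q r * Poch Q (m - r)) else 0

variable (hQ : ∀ i : ℕ, Q ^ (i + 1) ≠ 1)
include hQ

lemma poch_ne (k : ℕ) : Poch Q k ≠ 0 := by
  refine Finset.prod_ne_zero_iff.2 fun i _ => ?_
  exact sub_ne_zero.2 fun h => hQ i h.symm

lemma qB_self (m : ℕ) : qB Q m m = 1 := by
  rw [qB, if_pos le_rfl, Nat.sub_self]
  show Poch Q m / (Poch Q m * 1) = 1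
  rw [mul_one, div_self (poch_ne hQ m)]

lemma qB_zero (m : ℕ) : qB Q m 0 = 1 := by
  rw [qB, if_pos (Nat.zero_le m), Nat.sub_zero]
  show Poch Q m / (1 * Poch Q m) = 1
  rw [one_mul, div_self (poch_ne hQ m)]

lemma pascal (m r : ℕ) (h : r ≤ m) :
    qB Q (m + 1) (r + 1) = qB Q m (r + 1) + Q ^ (m - r) * qB Q m r := by
  rcases eq_or_lt_of_le h with rfl | h'
  · rw [qB_self hQ, qB_self hQ, qB, if_neg (by omega), Nat.sub_self, pow_zero]
    ring
  · have h1 : r + 1 ≤ m := h'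
    have e1 : Poch Q (m + 1) = Poch Q m * (1 - Q ^ (m + 1)) := by
      rw [Poch, prod_range_succ]; rfl
    have e2 : Poch Q (r + 1) = Poch Q r * (1 - Q ^ (r + 1)) := by
      rw [Poch, prod_range_succ]; rfl
    have e3 : m - r = (m - (r + 1)) + 1 := by omega
    have e4 : Poch Q (m - r) = Poch Q (m - (r + 1)) * (1 - Q ^ (m - r)) := by
      rw [Poch, e3, prod_range_succ, ← e3]; rfl
    have e5 : (m + 1) - (r + 1) = m - r := by omega
    have hq : Q ^ (m + 1) = Q ^ (m - r) * Q ^ (r + 1) := by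
      rw [← pow_add]; congr 1; omega
    rw [qB, qB, qB, if_pos (by omega), if_pos h1, if_pos h, e5]
    rw [e1, e2, e4, hq]
    have n1 := poch_ne hQ m
    have n2 := poch_ne hQ r
    have n3 := poch_ne hQ (m - (r + 1))
    have n4 : (1 - Q ^ (r + 1)) ≠ 0 := sub_ne_zero.2 fun hh => hQ r hh.symm
    have n5 : (1 - Q ^ (m - r)) ≠ 0 := by
      have e6 : m - r = (m - r - 1) + 1 := by omega
      rw [e6]; exact sub_ne_zero.2 fun hh => hQ _ hh.symm
    field_simp
    ring

lemma gauss (m : ℕ) (x : ℚ) :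
    ∏ j ∈ range m, (1 - x * Q ^ j) =
      ∑ r ∈ range (m + 1), (-1) ^ r * Q ^ r.choose 2 * qB Q m r * x ^ r := by
  induction m with
  | zero => simp [qB_zero hQ]
  | succ m ih =>
    have key : ∀ r ∈ range (m + 2),
        (-1) ^ r * Q ^ r.choose 2 * qB Q (m + 1) r * x ^ r =
        (-1) ^ r * Q ^ r.choose 2 * qB Q m r * x ^ r +
          (if r = 0 then 0 else
            (-1) ^ r * Q ^ r.choose 2 * (Q ^ (m - (r - 1)) * qB Q m (r - 1)) * x ^ r) := by
      rintro r hr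
      match r with
      | 0 => simp [qB_zero hQ]
      | (s + 1) =>
        have hs : s ≤ m := by simp at hr; omega
        rw [pascal hQ m s hs]
        simp only [Nat.add_sub_cancel, if_neg (Nat.succ_ne_zero s)]
        ring
    rw [prod_range_succ, ih, sum_congr rfl key, sum_add_distrib]
    have h1 : ∑ r ∈ range (m + 2), (-1) ^ r * Q ^ r.choose 2 * qB Q m r * x ^ r
        = ∑ r ∈ range (m + 1), (-1) ^ r * Q ^ r.choose 2 * qB Q m r * x ^ r := by
      rw [sum_range_succ]
      have : qB Q m (m + 1) = 0 := by rw [qB, if_neg (by omega)]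
      simp [this]
    have h2 : ∑ r ∈ range (m + 2),
        (if r = 0 then 0 else
          (-1) ^ r * Q ^ r.choose 2 * (Q ^ (m - (r - 1)) * qB Q m (r - 1)) * x ^ r)
        = -(x * Q ^ m) * ∑ r ∈ range (m + 1), (-1) ^ r * Q ^ r.choose 2 * qB Q m r * x ^ r := by
      rw [Finset.sum_range_succ']
      simp only [if_neg (Nat.succ_ne_zero _), Nat.add_sub_cancel, eq_self_iff_true, if_true,
        add_zero]
      rw [neg_mul, Finset.mul_sum, ← Finset.sum_neg_distrib]
      refine Finset.sum_congr rfl fun s hs => ?_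
      have hsm : s ≤ m := by simpa [Nat.lt_succ_iff] using hs
      have hc : (s + 1).choose 2 = s.choose 2 + s := by
        rw [Nat.choose_succ_succ, Nat.choose_one_right]; ring
      have hp : Q ^ (s + 1).choose 2 * Q ^ (m - s) = Q ^ s.choose 2 * Q ^ m := by
        rw [hc, ← pow_add, ← pow_add]; congr 1; omega
      have : Q ^ (s + 1).choose 2 * (Q ^ (m - s) * qB Q m s) =
          Q ^ s.choose 2 * Q ^ m * qB Q m s := by
        rw [← mul_assoc, hp]
      rw [pow_succ, pow_succ]
      calc (-1 : ℚ) ^ s * -1 * Q ^ (s + 1).choose 2 * (Q ^ (m - s) * qB Q m s) * (x ^ s * x)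
          = -(x * (Q ^ (s + 1).choose 2 * Q ^ (m - s)) * ((-1) ^ s * qB Q m s * x ^ s)) := by ring
        _ = _ := by rw [hp]; ring
    rw [h1, h2]
    ring


lemma poch_split (m r : ℕ) (h : r ≤ m) :
    Poch Q m = Poch Q (m - r) * ∏ j ∈ range r, (1 - Q ^ (m - j)) := by
  have h1 : ∏ j ∈ range r, (1 - Q ^ (m - j))
      = ∏ j ∈ range r, (1 - Q ^ ((m - r) + (r - 1 - j) + 1)) := by
    refine prod_congr rfl fun j hj => ?_
    rw [mem_range] at hj
    have : m - j = (m - r) + (r - 1 - j) + 1 := by omega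
    rw [this]
  have h2 := prod_range_reflect (fun i => 1 - Q ^ ((m - r) + i + 1)) r
  rw [h1, h2]
  calc Poch Q m = Poch Q (m - r + r) := by rw [show m - r + r = m from by omega]
    _ = Poch Q (m - r) * ∏ i ∈ range r, (1 - Q ^ (m - r + i + 1)) :=
        prod_range_add (fun i => 1 - Q ^ (i + 1)) (m - r) r

omit hQ in
lemma inner_prod_zero (hQ0 : Q ≠ 0) (m s : ℕ) (hs : s < m) :
    ∏ j ∈ range m, (1 - (Q⁻¹) ^ s * Q ^ j) = 0 := by
  refine prod_eq_zero (mem_range.2 hs) ?_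
  rw [← mul_pow, inv_mul_cancel₀ hQ0, one_pow, sub_self]

lemma key (hQ0 : Q ≠ 0) (m : ℕ) :
    ∑ r ∈ range (m + 1), (-1) ^ r * Q ^ r.choose 2 * qB Q m r *
        ∏ j ∈ range m, (1 - Q ^ (m - r + (j + 1))) =
      Q ^ (m ^ 2) * Poch Q m := by
  have step1 : ∀ r ∈ range (m + 1),
      (-1) ^ r * Q ^ r.choose 2 * qB Q m r * ∏ j ∈ range m, (1 - Q ^ (m - r + (j + 1))) =
      ∑ s ∈ range (m + 1), (-1) ^ s * Q ^ s.choose 2 * qB Q m s * (Q ^ (m + 1)) ^ s *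
        ((-1) ^ r * Q ^ r.choose 2 * qB Q m r * ((Q⁻¹) ^ s) ^ r) := by
    intro r hr
    rw [mem_range, Nat.lt_succ_iff] at hr
    have e1 : ∀ j, Q ^ (m - r + (j + 1)) = Q ^ (m + 1) * (Q⁻¹) ^ r * Q ^ j := by
      intro j
      rw [show m - r + (j + 1) = (m + 1 + j) - r by omega, pow_sub₀ _ hQ0 (by omega),
        ← inv_pow, pow_add]
      ring
    have e2 : ∏ j ∈ range m, (1 - Q ^ (m - r + (j + 1)))
        = ∏ j ∈ range m, (1 - (Q ^ (m + 1) * (Q⁻¹) ^ r) * Q ^ j) := by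
      refine prod_congr rfl fun j _ => ?_
      rw [e1 j]
    rw [e2, gauss hQ m, Finset.mul_sum]
    refine sum_congr rfl fun s _ => ?_
    rw [mul_pow, ← pow_mul ((Q:ℚ)⁻¹) r s, ← pow_mul ((Q:ℚ)⁻¹) s r, Nat.mul_comm r s]
    ring
  rw [sum_congr rfl step1, Finset.sum_comm]
  have step2 : ∀ s ∈ range (m + 1),
      (∑ r ∈ range (m + 1), (-1) ^ s * Q ^ s.choose 2 * qB Q m s * (Q ^ (m + 1)) ^ s *
        ((-1) ^ r * Q ^ r.choose 2 * qB Q m r * ((Q⁻¹) ^ s) ^ r)) =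
      (-1) ^ s * Q ^ s.choose 2 * qB Q m s * (Q ^ (m + 1)) ^ s *
        ∏ j ∈ range m, (1 - (Q⁻¹) ^ s * Q ^ j) := by
    intro s _
    rw [← Finset.mul_sum, ← gauss hQ m]
  rw [sum_congr rfl step2]
  rw [Finset.sum_eq_single_of_mem m (mem_range.2 (Nat.lt_succ_self m))
    (fun s hs hsm => by
      rw [inner_prod_zero hQ0 m s (by rw [mem_range] at hs; omega), mul_zero])]
  -- now compute the s = m term
  have prodval : ∏ j ∈ range m, (1 - (Q⁻¹) ^ m * Q ^ j)
      = (-1) ^ m * (Q⁻¹) ^ (∑ j ∈ range m, (m - j)) * Poch Q m := by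
    have e3 : ∀ j ∈ range m, (1 - (Q⁻¹) ^ m * Q ^ j)
        = (-1) * (Q⁻¹) ^ (m - j) * (1 - Q ^ (m - j)) := by
      intro j hj
      rw [mem_range] at hj
      have h4 : ((Q:ℚ)⁻¹) ^ m * Q ^ j = (Q⁻¹) ^ (m - j) := by
        rw [inv_pow, inv_pow, pow_sub₀ Q hQ0 hj.le, mul_inv, inv_inv]
      have h5 : ((Q:ℚ)⁻¹) ^ (m - j) * Q ^ (m - j) = 1 := by
        rw [← mul_pow, inv_mul_cancel₀ hQ0, one_pow]
      rw [h4]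
      linear_combination -h5
    rw [prod_congr rfl e3, prod_mul_distrib, prod_mul_distrib, prod_const, card_range,
      Finset.prod_pow_eq_pow_sum]
    have := poch_split hQ m m le_rfl
    rw [Nat.sub_self] at this
    have hp0 : Poch Q 0 = 1 := by simp [Poch]
    rw [hp0, one_mul] at this
    rw [← this]
  rw [prodval, qB_self hQ]
  have hS : (∑ j ∈ range m, (m - j)) = (∑ j ∈ range m, j) + m := by
    rw [← Finset.sum_range_reflect]
    rcases Nat.eq_zero_or_pos m with rfl | hm
    · simp
    · rw [Finset.sum_congr rfl (fun j hj => by rw [mem_range] at hj; omega : ∀ j ∈ range m, m - (m - 1 - j) = j + 1)]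
      rw [Finset.sum_add_distrib, Finset.sum_const, card_range, smul_eq_mul, mul_one]
  have hpow : Q ^ m.choose 2 * (Q ^ (m + 1)) ^ m = Q ^ (m ^ 2) * Q ^ (∑ j ∈ range m, (m - j)) := by
    rw [← pow_mul, ← pow_add, ← pow_add]
    congr 1
    have e1 : (m + 1) * m = m ^ 2 + m := by ring
    have e2 : m * (m - 1) + m = m ^ 2 := by
      cases m with
      | zero => rfl
      | succ k => simp [Nat.succ_sub_one]; ring
    have hsum : (∑ j ∈ range m, j) * 2 = m * (m - 1) := Finset.sum_range_id_mul_two m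
    have hch : m.choose 2 = m * (m - 1) / 2 := Nat.choose_two_right m
    rw [hS]
    omega
  have hQS : ((Q:ℚ)⁻¹) ^ (∑ j ∈ range m, (m - j)) = (Q ^ (∑ j ∈ range m, (m - j)))⁻¹ :=
    inv_pow Q _
  have hne : (Q:ℚ) ^ (∑ j ∈ range m, (m - j)) ≠ 0 := pow_ne_zero _ hQ0
  calc (-1) ^ m * Q ^ m.choose 2 * 1 * (Q ^ (m + 1)) ^ m *
        ((-1) ^ m * (Q⁻¹) ^ (∑ j ∈ range m, (m - j)) * Poch Q m)
      = ((-1) * (-1)) ^ m * (Q ^ m.choose 2 * (Q ^ (m + 1)) ^ m *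
          (Q ^ (∑ j ∈ range m, (m - j)))⁻¹) * Poch Q m := by
        rw [hQS, mul_pow]; ring
    _ = Q ^ (m ^ 2) * Poch Q m := by
        rw [neg_mul_neg, one_mul, one_pow, one_mul, hpow]
        field_simp


end Part2
section Part1
open Finset LinearMap Module

section Counting
variable {F : Type} [Field F] [Fintype F]

instance finLinMap (a b : ℕ) : Finite ((Fin a → F) →ₗ[F] (Fin b → F)) :=
  Finite.of_injective (fun f => (f : (Fin a → F) → (Fin b → F))) DFunLike.coe_injective

instance finLinEquiv (a : ℕ) : Finite ((Fin a → F) ≃ₗ[F] (Fin a → F)) :=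
  Finite.of_injective (fun f => (f : (Fin a → F) → (Fin a → F))) fun e e' h => by
    apply LinearEquiv.toLinearMap_injective
    apply LinearMap.ext
    exact fun x => congrFun h x

/-- Injective linear maps correspond to linearly independent tuples. -/
noncomputable def injEquiv (a b : ℕ) :
    {g : (Fin a → F) →ₗ[F] (Fin b → F) // Function.Injective g} ≃
      {s : Fin a → (Fin b → F) // LinearIndependent F s} where
  toFun g := ⟨g.1 ∘ (Pi.basisFun F (Fin a)),
    (Pi.basisFun F (Fin a)).linearIndependent.map' g.1 (LinearMap.ker_eq_bot.2 g.2)⟩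
  invFun s := ⟨(Pi.basisFun F (Fin a)).constr F s.1, by
    rw [← LinearMap.ker_eq_bot]
    refine (Submodule.eq_bot_iff _).2 fun x hx => ?_
    rw [LinearMap.mem_ker, Basis.constr_apply_fintype] at hx
    have h0 := Fintype.linearIndependent_iff.1 s.2 _ hx
    have hz : (Pi.basisFun F (Fin a)).equivFun x = 0 := funext h0
    exact ((Pi.basisFun F (Fin a)).equivFun.map_eq_zero_iff).1 hz⟩
  left_inv g := Subtype.ext <| Basis.ext (Pi.basisFun F (Fin a)) fun i => by
    rw [Basis.constr_basis]; rfl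
  right_inv s := Subtype.ext <| funext fun i => Basis.constr_basis _ _ _ _

lemma cardInj (a b : ℕ) (h : a ≤ b) :
    Nat.card {g : (Fin a → F) →ₗ[F] (Fin b → F) // Function.Injective g} =
      ∏ j ∈ range a, (Fintype.card F ^ b - Fintype.card F ^ j) := by
  rw [Nat.card_congr (injEquiv a b),
    card_linearIndependent
      (by rw [Module.finrank_pi, Fintype.card_fin]; exact h : a ≤ finrank F (Fin b → F))]
  simp only [Module.finrank_pi, Fintype.card_fin]
  rw [← Fin.prod_univ_eq_prod_range (fun j => Fintype.card F ^ b - Fintype.card F ^ j) a]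

/-- Auto-equivs correspond to injective endomorphisms. -/
noncomputable def autEquiv (a : ℕ) :
    ((Fin a → F) ≃ₗ[F] (Fin a → F)) ≃
      {g : (Fin a → F) →ₗ[F] (Fin a → F) // Function.Injective g} where
  toFun e := ⟨e.toLinearMap, e.injective⟩
  invFun g := LinearEquiv.ofBijective g.1
    ⟨g.2, (LinearMap.injective_iff_surjective).1 g.2⟩
  left_inv e := by ext x; rfl
  right_inv g := Subtype.ext rfl

lemma cardAut (a : ℕ) :
    Nat.card ((Fin a → F) ≃ₗ[F] (Fin a → F)) =
      ∏ j ∈ range a, (Fintype.card F ^ a - Fintype.card F ^ j) := by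
  rw [Nat.card_congr (autEquiv a), cardInj a a le_rfl]

lemma rank_iff_surj {a b : ℕ} (M : Matrix (Fin a) (Fin b) F) :
    M.rank = a ↔ Function.Surjective (Matrix.toLin' M) := by
  have hdef : finrank F (range (Matrix.toLin' M)) = M.rank := by
    rw [Matrix.toLin'_apply']; rfl
  constructor
  · intro h
    rw [← LinearMap.range_eq_top]
    apply Submodule.eq_top_of_finrank_eq
    rw [hdef, h, Module.finrank_pi, Fintype.card_fin]
  · intro h
    rw [← hdef, LinearMap.range_eq_top.2 h, finrank_top, Module.finrank_pi,
      Fintype.card_fin]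

lemma rank_iff_inj {a b : ℕ} (M : Matrix (Fin b) (Fin a) F) :
    M.rank = a ↔ Function.Injective (Matrix.toLin' M) := by
  have hdef : finrank F (range (Matrix.toLin' M)) = M.rank := by
    rw [Matrix.toLin'_apply']; rfl
  have hrn := LinearMap.finrank_range_add_finrank_ker (Matrix.toLin' M)
  rw [Module.finrank_pi, Fintype.card_fin] at hrn
  constructor
  · intro h
    rw [← LinearMap.ker_eq_bot]
    refine Submodule.finrank_eq_zero.1 ?_
    rw [h] at hdef
    omega
  · intro h
    have : LinearMap.ker (Matrix.toLin' M) = ⊥ := LinearMap.ker_eq_bot.2 h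
    rw [this, finrank_bot] at hrn
    omega

lemma cardSurj (a b : ℕ) (h : a ≤ b) :
    Nat.card {f : (Fin b → F) →ₗ[F] (Fin a → F) // Function.Surjective f} =
      ∏ j ∈ range a, (Fintype.card F ^ b - Fintype.card F ^ j) := by
  have e1 : {M : Matrix (Fin a) (Fin b) F // M.rank = a} ≃
      {f : (Fin b → F) →ₗ[F] (Fin a → F) // Function.Surjective f} :=
    Equiv.subtypeEquiv Matrix.toLin'.toEquiv fun M => rank_iff_surj M
  have e2 : {M : Matrix (Fin b) (Fin a) F // M.rank = a} ≃
      {M : Matrix (Fin a) (Fin b) F // M.rank = a} :=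
    Equiv.subtypeEquiv
      (⟨Matrix.transpose, Matrix.transpose, fun M => Matrix.transpose_transpose M,
        fun M => Matrix.transpose_transpose M⟩ :
        Matrix (Fin b) (Fin a) F ≃ Matrix (Fin a) (Fin b) F)
      fun M => by
        show M.rank = a ↔ (Matrix.transpose M).rank = a
        rw [Matrix.rank_transpose]
  have e3 : {g : (Fin a → F) →ₗ[F] (Fin b → F) // Function.Injective g} ≃
      {M : Matrix (Fin b) (Fin a) F // M.rank = a} :=
    (Equiv.subtypeEquiv Matrix.toLin'.toEquiv fun M => rank_iff_inj M).symm
  rw [← Nat.card_congr (e3.trans (e2.trans e1)), cardInj a b h]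

variable (F) in
/-- The map sending (surjection, injection) to the composite endomorphism of rank r. -/
noncomputable def pairsToT (m r : ℕ) :
    ({f : (Fin m → F) →ₗ[F] (Fin r → F) // Function.Surjective f} ×
      {g : (Fin r → F) →ₗ[F] (Fin m → F) // Function.Injective g}) →
    {X : (Fin m → F) →ₗ[F] (Fin m → F) // finrank F (LinearMap.range X) = r} :=
  fun p => ⟨p.2.1 ∘ₗ p.1.1, by
    rw [LinearMap.range_comp, LinearMap.range_eq_top.2 p.1.2, Submodule.map_top,
      LinearMap.finrank_range_of_inj p.2.2, Module.finrank_pi, Fintype.card_fin]⟩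

/-- Each fiber of `pairsToT` is equivalent to the linear isos onto the range. -/
noncomputable def fiberEquiv (m r : ℕ)
    (X : {X : (Fin m → F) →ₗ[F] (Fin m → F) // finrank F (LinearMap.range X) = r}) :
    {p // pairsToT F m r p = X} ≃ ((Fin r → F) ≃ₗ[F] LinearMap.range X.1) where
  toFun pp :=
    (LinearEquiv.ofInjective pp.1.2.1 pp.1.2.2).trans
      (LinearEquiv.ofEq _ _ (by
        have hval : pp.1.2.1 ∘ₗ pp.1.1.1 = X.1 := congrArg Subtype.val pp.2
        rw [← hval, LinearMap.range_comp, LinearMap.range_eq_top.2 pp.1.1.2,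
          Submodule.map_top]))
  invFun e :=
    ⟨(⟨e.symm.toLinearMap ∘ₗ X.1.rangeRestrict, by
        rw [LinearMap.coe_comp]
        exact e.symm.surjective.comp X.1.surjective_rangeRestrict⟩,
      ⟨(LinearMap.range X.1).subtype ∘ₗ e.toLinearMap, by
        rw [LinearMap.coe_comp]
        exact (Submodule.injective_subtype _).comp e.injective⟩), by
      apply Subtype.ext
      show ((LinearMap.range X.1).subtype ∘ₗ e.toLinearMap) ∘ₗ
        (e.symm.toLinearMap ∘ₗ X.1.rangeRestrict) = X.1
      apply LinearMap.ext
      intro x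
      simp⟩
  left_inv pp := by
    obtain ⟨⟨⟨f, hf⟩, ⟨g, hg⟩⟩, hfx⟩ := pp
    have hval : g ∘ₗ f = X.1 := congrArg Subtype.val hfx
    apply Subtype.ext
    apply Prod.ext <;> apply Subtype.ext <;> apply LinearMap.ext <;> intro x
    · show _ = f x
      have hx : (LinearEquiv.ofInjective g hg).trans
          (LinearEquiv.ofEq _ _ (by
            rw [← hval, LinearMap.range_comp, LinearMap.range_eq_top.2 hf,
              Submodule.map_top])) (f x) = X.1.rangeRestrict x := by
        apply Subtype.ext
        show g (f x) = X.1 x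
        rw [← hval]; rfl
      show ((LinearEquiv.ofInjective g hg).trans (LinearEquiv.ofEq _ _ _)).symm
        (X.1.rangeRestrict x) = f x
      rw [← hx, LinearEquiv.symm_apply_apply]
    · show ((LinearMap.range X.1).subtype ∘ₗ _) x = g x
      rfl
  right_inv e := by
    apply LinearEquiv.toLinearMap_injective
    apply LinearMap.ext
    intro w
    apply Subtype.ext
    rfl


lemma card_rank_mul (m r : ℕ) (hr : r ≤ m) :
    Nat.card {X : Matrix (Fin m) (Fin m) F // X.rank = r} *
      ∏ j ∈ range r, (Fintype.card F ^ r - Fintype.card F ^ j) =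
    (∏ j ∈ range r, (Fintype.card F ^ m - Fintype.card F ^ j)) ^ 2 := by
  classical
  have eM : {X : Matrix (Fin m) (Fin m) F // X.rank = r} ≃
      {X : (Fin m → F) →ₗ[F] (Fin m → F) // finrank F (LinearMap.range X) = r} :=
    Equiv.subtypeEquiv Matrix.toLin'.toEquiv fun M => by
      show M.rank = r ↔ finrank F (LinearMap.range (Matrix.toLin' M)) = r
      rw [Matrix.toLin'_apply']
      exact Iff.rfl
  have hfib : ∀ X : {X : (Fin m → F) →ₗ[F] (Fin m → F) //
      finrank F (LinearMap.range X) = r},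
      Nat.card {p // pairsToT F m r p = X} =
        Nat.card ((Fin r → F) ≃ₗ[F] (Fin r → F)) := by
    intro X
    rw [Nat.card_congr (fiberEquiv m r X)]
    have hfr : finrank F (LinearMap.range X.1) = finrank F (Fin r → F) := by
      rw [X.2, Module.finrank_pi, Fintype.card_fin]
    obtain ⟨u⟩ := FiniteDimensional.nonempty_linearEquiv_of_finrank_eq hfr
    exact Nat.card_congr
      ⟨fun e => e.trans u, fun e => e.trans u.symm,
        fun e => by
          apply LinearEquiv.toLinearMap_injective
          ext x
          simp [LinearEquiv.trans_apply],
        fun e => by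
          apply LinearEquiv.toLinearMap_injective
          ext x
          simp [LinearEquiv.trans_apply]⟩
  have hsum : Nat.card
      ({f : (Fin m → F) →ₗ[F] (Fin r → F) // Function.Surjective f} ×
        {g : (Fin r → F) →ₗ[F] (Fin m → F) // Function.Injective g}) =
      Nat.card {X : (Fin m → F) →ₗ[F] (Fin m → F) //
        finrank F (LinearMap.range X) = r} *
      Nat.card ((Fin r → F) ≃ₗ[F] (Fin r → F)) := by
    rw [← Nat.card_congr (Equiv.sigmaFiberEquiv (pairsToT F m r))]
    letI : ∀ X : {X : (Fin m → F) →ₗ[F] (Fin m → F) //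
        finrank F (LinearMap.range X) = r},
        Fintype {p // pairsToT F m r p = X} := fun X => Fintype.ofFinite _
    letI : Fintype {X : (Fin m → F) →ₗ[F] (Fin m → F) //
        finrank F (LinearMap.range X) = r} := Fintype.ofFinite _
    rw [Nat.card_eq_fintype_card, Fintype.card_sigma]
    have : ∀ X, Fintype.card {p // pairsToT F m r p = X} =
        Nat.card ((Fin r → F) ≃ₗ[F] (Fin r → F)) := fun X => by
      rw [← Nat.card_eq_fintype_card, hfib X]
    rw [Finset.sum_congr rfl fun X _ => this X, Finset.sum_const, card_univ,
      smul_eq_mul]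
    congr 1
    exact (Nat.card_eq_fintype_card).symm
  rw [Nat.card_congr eM, ← cardAut r, ← hsum, Nat.card_prod,
    cardSurj r m hr, cardInj r m hr, sq]

end Counting

end Part1
section Glue
open Finset LinearMap Module
variable {F : Type} [Field F] [Fintype F]

lemma prodMG (hQ : ∀ i : ℕ, ((Fintype.card F : ℚ)) ^ (i + 1) ≠ 1) (m r : ℕ) (hr : r ≤ m) :
    ∏ j ∈ range r, ((Fintype.card F : ℚ) ^ m - (Fintype.card F : ℚ) ^ j) =
      (-1) ^ r * (Fintype.card F : ℚ) ^ r.choose 2 *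
        Poch (Fintype.card F : ℚ) m / Poch (Fintype.card F : ℚ) (m - r) := by
  set Q : ℚ := (Fintype.card F : ℚ) with hQdef
  have e1 : ∀ j ∈ range r, Q ^ m - Q ^ j = (-1) * Q ^ j * (1 - Q ^ (m - j)) := by
    intro j hj
    rw [Finset.mem_range] at hj
    have hmj : Q ^ (m - j) * Q ^ j = Q ^ m := by
      rw [← pow_add]; congr 1; omega
    rw [← hmj]; ring
  rw [prod_congr rfl e1, prod_mul_distrib, prod_mul_distrib, prod_const, card_range,
    Finset.prod_pow_eq_pow_sum, Finset.sum_range_id, ← Nat.choose_two_right,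
    poch_split hQ m r hr]
  have n3 := poch_ne hQ (m - r)
  field_simp

lemma main_sum (m : ℕ) :
    ∑ r ∈ range (m + 1),
        (Nat.card {X : Matrix (Fin m) (Fin m) F // X.rank = r} : ℚ) *
          Poch (Fintype.card F : ℚ) (2 * m - r) =
      (Fintype.card F : ℚ) ^ (m ^ 2) * (Poch (Fintype.card F : ℚ) m) ^ 2 := by
  set Q : ℚ := (Fintype.card F : ℚ) with hQdef
  have hq2 : 1 < Fintype.card F := Fintype.one_lt_card
  have hQ1 : (1 : ℚ) < Q := Nat.one_lt_cast.2 hq2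
  have hQ0 : Q ≠ 0 := by positivity
  have hQ : ∀ i : ℕ, Q ^ (i + 1) ≠ 1 := by
    intro i
    have : (1:ℚ) < Q ^ (i + 1) := one_lt_pow₀ hQ1 (Nat.succ_ne_zero i)
    exact ne_of_gt this
  have hcast : ∀ a b : ℕ, b ≤ a →
      ((∏ j ∈ range b, (Fintype.card F ^ a - Fintype.card F ^ j) : ℕ) : ℚ) =
        ∏ j ∈ range b, (Q ^ a - Q ^ j) := by
    intro a b hba
    rw [Nat.cast_prod]
    refine prod_congr rfl fun j hj => ?_
    rw [Finset.mem_range] at hj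
    rw [Nat.cast_sub (Nat.pow_le_pow_right (Nat.one_le_of_lt hq2) (by omega)),
      Nat.cast_pow, Nat.cast_pow]
  have hterm : ∀ r ∈ Finset.range (m + 1),
      (Nat.card {X : Matrix (Fin m) (Fin m) F // X.rank = r} : ℚ) * Poch Q (2 * m - r) =
      Poch Q m * ((-1) ^ r * Q ^ r.choose 2 * qB Q m r *
        ∏ j ∈ range m, (1 - Q ^ (m - r + (j + 1)))) := by
    intro r hr
    rw [Finset.mem_range, Nat.lt_succ_iff] at hr
    have hNG : (Nat.card {X : Matrix (Fin m) (Fin m) F // X.rank = r} : ℚ) *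
        ∏ j ∈ range r, (Q ^ r - Q ^ j) = (∏ j ∈ range r, (Q ^ m - Q ^ j)) ^ 2 := by
      rw [← hcast r r le_rfl, ← hcast m r hr]
      exact_mod_cast card_rank_mul m r hr
    have hGq : ∏ j ∈ range r, (Q ^ r - Q ^ j) = (-1) ^ r * Q ^ r.choose 2 * Poch Q r := by
      rw [prodMG hQ r r le_rfl, Nat.sub_self,
        show Poch Q 0 = 1 from by simp [Poch], div_one]
    have hIq : ∏ j ∈ range r, (Q ^ m - Q ^ j) =
        (-1) ^ r * Q ^ r.choose 2 * Poch Q m / Poch Q (m - r) := prodMG hQ m r hr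
    have hGne : ((-1 : ℚ)) ^ r * Q ^ r.choose 2 * Poch Q r ≠ 0 := by
      apply mul_ne_zero
      apply mul_ne_zero
      · exact pow_ne_zero _ (by norm_num)
      · exact pow_ne_zero _ hQ0
      · exact poch_ne hQ r
    have hN : (Nat.card {X : Matrix (Fin m) (Fin m) F // X.rank = r} : ℚ) =
        (∏ j ∈ range r, (Q ^ m - Q ^ j)) ^ 2 / ((-1) ^ r * Q ^ r.choose 2 * Poch Q r) := by
      rw [eq_div_iff hGne, ← hGq]; exact hNG
    have hsplit : Poch Q (2 * m - r) =
        Poch Q (m - r) * ∏ j ∈ range m, (1 - Q ^ (m - r + (j + 1))) := by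
      calc Poch Q (2 * m - r) = Poch Q ((m - r) + m) := by
            rw [show m - r + m = 2 * m - r from by omega]
        _ = Poch Q (m - r) * ∏ i ∈ range m, (1 - Q ^ (m - r + i + 1)) :=
            prod_range_add (fun i => 1 - Q ^ (i + 1)) (m - r) m
        _ = Poch Q (m - r) * ∏ i ∈ range m, (1 - Q ^ (m - r + (i + 1))) := by
            rw [prod_congr rfl fun i _ => by rw [add_assoc]]
    rw [hN, hIq, hsplit, qB, if_pos hr]
    have n1 := poch_ne hQ m
    have n2 := poch_ne hQ r
    have n3 := poch_ne hQ (m - r)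
    have n4 : ((-1 : ℚ)) ^ r ≠ 0 := pow_ne_zero _ (by norm_num)
    have n5 : (Q : ℚ) ^ r.choose 2 ≠ 0 := pow_ne_zero _ hQ0
    field_simp
  rw [Finset.sum_congr rfl hterm, ← Finset.mul_sum, key hQ hQ0 m, sq]
  ring

end Glue

end Stmt6

/-- `(1/q^{n²}) ∑_{r=0}^{n-1} q^{2n-1} |M(n-1,n-1,r,q)| (q;q)_{2n-2-r} = (q;q)_{n-1}²`. -/
theorem stmt6 (F : Type) [Field F] [Fintype F] (q : ℕ) (hq : q = Fintype.card F) (n : ℕ)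
    (hn : 1 ≤ n) :
    (1 / (q : ℚ) ^ (n ^ 2)) *
      ∑ r ∈ Finset.range n,
        (q : ℚ) ^ (2 * n - 1) *
          (Nat.card {X : Matrix (Fin (n - 1)) (Fin (n - 1)) F // X.rank = r} : ℚ) *
          ∏ i ∈ Finset.range (2 * n - 2 - r), (1 - (q : ℚ) ^ (i + 1)) =
      (∏ i ∈ Finset.range (n - 1), (1 - (q : ℚ) ^ (i + 1))) ^ 2 := by
  subst hq
  obtain ⟨m, rfl⟩ : ∃ m, n = m + 1 := ⟨n - 1, by omega⟩
  set Q : ℚ := ((Fintype.card F : ℕ) : ℚ) with hQdef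
  have hq2 : 1 < Fintype.card F := Fintype.one_lt_card
  have hQ1 : (1 : ℚ) < Q := Nat.one_lt_cast.2 hq2
  have hQ0 : Q ≠ 0 := by positivity
  have hterm : ∀ r ∈ Finset.range (m + 1),
      Q ^ (2 * (m + 1) - 1) *
          (Nat.card {X : Matrix (Fin (m + 1 - 1)) (Fin (m + 1 - 1)) F // X.rank = r} : ℚ) *
          ∏ i ∈ Finset.range (2 * (m + 1) - 2 - r), (1 - Q ^ (i + 1)) =
      Q ^ (2 * m + 1) *
        ((Nat.card {X : Matrix (Fin m) (Fin m) F // X.rank = r} : ℚ) *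
          Stmt6.Poch Q (2 * m - r)) := by
    intro r hr
    rw [show 2 * (m + 1) - 1 = 2 * m + 1 from by omega,
      show 2 * (m + 1) - 2 - r = 2 * m - r from by omega, mul_assoc]
    rfl
  rw [Finset.sum_congr rfl hterm, ← Finset.mul_sum, Stmt6.main_sum m]
  have hg : (∏ i ∈ Finset.range (m + 1 - 1), (1 - Q ^ (i + 1))) = Stmt6.Poch Q m := rfl
  rw [hg, show (m + 1) ^ 2 = (2 * m + 1) + m ^ 2 from by ring, pow_add]
  have h1 : Q ^ (2 * m + 1) ≠ 0 := pow_ne_zero _ hQ0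
  have h2 : Q ^ (m ^ 2) ≠ 0 := pow_ne_zero _ hQ0
  field_simp
  ring
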